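/- Let d ≥ 1, σ > 0, b, c ∈ ℝ, let f : ℝ^d → ℝ^d be of class C² and φ : ℝ^d → ℝ of class C⁴. Define the operators Lψ := ∇ψ·f + (σ²/2)Δψ and Ā₁ψ := b∇ψ·f + (c²σ²/2)Δψ. Then the commutator satisfies, pointwise for every x ∈ ℝ^d: [L, Ā₁]φ(x) = L(Ā₁φ)(x) − Ā₁(Lφ)(x) = ((b − c²)/2) σ² ∇φ(x)·Σ_{i=1}^d f''(x)(e_i,e_i) + (b − c²) σ² Σ_{i=1}^d φ''(x)(f'(x)e_i, e_i). -/

import Mathlib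

open MeasureTheory Real

section Aux

variable {E F : Type*} [NormedAddCommGroup E] [NormedSpace ℝ E]
  [NormedAddCommGroup F] [NormedSpace ℝ F]

/-- Derivative of a CLM-valued map applied to a constant vector. -/
lemma fderiv_clm_apply_const' {c : E → E →L[ℝ] F} {x : E}
    (hc : DifferentiableAt ℝ c x) (w v : E) :
    fderiv ℝ (fun y => c y w) x v = fderiv ℝ c x v w := by
  rw [fderiv_clm_apply hc (differentiableAt_const w)]
  simp

/-- Symmetry of the second derivative of a C² function. -/
lemma sym2' {u : E → F} (hu1 : Differentiable ℝ u)
    (hu2 : DifferentiableAt ℝ (fderiv ℝ u) x) (v w : E) :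
    fderiv ℝ (fderiv ℝ u) x v w = fderiv ℝ (fderiv ℝ u) x w v :=
  second_derivative_symmetric (fun y => (hu1 y).hasFDerivAt) hu2.hasFDerivAt v w

end Aux

section Key

variable {E : Type*} [NormedAddCommGroup E] [NormedSpace ℝ E]

/-- Key identity: the pointwise commutator of the drift and a second-derivative direction. -/
lemma key_i (f : E → E) (hf : ContDiff ℝ 2 f) (φ : E → ℝ) (hφ : ContDiff ℝ 4 φ) (x v : E) :
    fderiv ℝ (fderiv ℝ (fun y => fderiv ℝ φ y (f y))) x v v
      = fderiv ℝ (fun y => fderiv ℝ (fderiv ℝ φ) y v v) x (f x)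
        + fderiv ℝ φ x (fderiv ℝ (fderiv ℝ f) x v v)
        + 2 * fderiv ℝ (fderiv ℝ φ) x (fderiv ℝ f x v) v := by
  have hφ1 : Differentiable ℝ φ := hφ.differentiable (by norm_num)
  have hφd : ContDiff ℝ 3 (fderiv ℝ φ) := hφ.fderiv_right (by norm_num)
  have hφ2 : Differentiable ℝ (fderiv ℝ φ) := hφd.differentiable (by norm_num)
  have hφdd : ContDiff ℝ 2 (fderiv ℝ (fderiv ℝ φ)) := hφd.fderiv_right (by norm_num)
  have hφ3 : Differentiable ℝ (fderiv ℝ (fderiv ℝ φ)) := hφdd.differentiable (by norm_num)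
  have hf1 : Differentiable ℝ f := hf.differentiable two_ne_zero
  have hfd : ContDiff ℝ 1 (fderiv ℝ f) := hf.fderiv_right (by norm_num)
  have hf2 : Differentiable ℝ (fderiv ℝ f) := hfd.differentiable one_ne_zero
  -- first derivative of g y = fderiv φ y (f y)
  have hg : ∀ y w, fderiv ℝ (fun z => fderiv ℝ φ z (f z)) y w
      = fderiv ℝ φ y (fderiv ℝ f y w) + fderiv ℝ (fderiv ℝ φ) y w (f y) := by
    intro y w
    rw [fderiv_clm_apply (hφ2 y) (hf1 y)]
    simp
  have hg2 : ContDiff ℝ 2 (fun z => fderiv ℝ φ z (f z)) :=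
    (hφd.of_le (by norm_num)).clm_apply hf
  have hgd : Differentiable ℝ (fderiv ℝ (fun z => fderiv ℝ φ z (f z))) :=
    (hg2.fderiv_right (m := 1) (by norm_num)).differentiable one_ne_zero
  -- second derivative of g in directions v v
  have step1 : fderiv ℝ (fderiv ℝ (fun y => fderiv ℝ φ y (f y))) x v v
      = fderiv ℝ (fun y => fderiv ℝ (fun z => fderiv ℝ φ z (f z)) y v) x v := by
    rw [fderiv_clm_apply_const' (hgd x) v v]
  have hfun : (fun y => fderiv ℝ (fun z => fderiv ℝ φ z (f z)) y v)
      = fun y => fderiv ℝ φ y (fderiv ℝ f y v) + fderiv ℝ (fderiv ℝ φ) y v (f y) :=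
    funext fun y => hg y v
  have hd1 : ∀ y, DifferentiableAt ℝ (fun z => fderiv ℝ φ z (fderiv ℝ f z v)) y :=
    fun y => (hφ2 y).clm_apply ((hf2 y).clm_apply (differentiableAt_const v))
  have hd2 : ∀ y, DifferentiableAt ℝ (fun z => fderiv ℝ (fderiv ℝ φ) z v (f z)) y :=
    fun y => ((hφ3 y).clm_apply (differentiableAt_const v)).clm_apply (hf1 y)
  have t1 : fderiv ℝ (fun z => fderiv ℝ φ z (fderiv ℝ f z v)) x v
      = fderiv ℝ φ x (fderiv ℝ (fderiv ℝ f) x v v) + fderiv ℝ (fderiv ℝ φ) x v (fderiv ℝ f x v) := by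
    rw [fderiv_clm_apply (hφ2 x) ((hf2 x).clm_apply (differentiableAt_const v))]
    simp [fderiv_clm_apply_const' (hf2 x) v v]
  have t2 : fderiv ℝ (fun z => fderiv ℝ (fderiv ℝ φ) z v (f z)) x v
      = fderiv ℝ (fderiv ℝ φ) x v (fderiv ℝ f x v)
        + fderiv ℝ (fderiv ℝ (fderiv ℝ φ)) x v v (f x) := by
    rw [fderiv_clm_apply ((hφ3 x).clm_apply (differentiableAt_const v)) (hf1 x)]
    simp [fderiv_clm_apply_const' (hφ3 x) v v]
  -- third derivative symmetries
  have syma : ∀ a b' : E, fderiv ℝ (fderiv ℝ (fderiv ℝ φ)) x a b'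
      = fderiv ℝ (fderiv ℝ (fderiv ℝ φ)) x b' a :=
    fun a b' => second_derivative_symmetric (fun y => (hφ2 y).hasFDerivAt)
      (hφ3 x).hasFDerivAt a b'
  have symb : ∀ (y : E) (b' c' : E), fderiv ℝ (fderiv ℝ φ) y b' c'
      = fderiv ℝ (fderiv ℝ φ) y c' b' :=
    fun y b' c' => sym2' hφ1 (hφ2 y) b' c'
  have symD3 : ∀ a b' c' : E, fderiv ℝ (fderiv ℝ (fderiv ℝ φ)) x a b' c'
      = fderiv ℝ (fderiv ℝ (fderiv ℝ φ)) x a c' b' := by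
    intro a b' c'
    have e1 : fderiv ℝ (fun y => fderiv ℝ (fderiv ℝ φ) y b' c') x a
        = fderiv ℝ (fderiv ℝ (fderiv ℝ φ)) x a b' c' := by
      rw [fderiv_clm_apply_const' ((hφ3 x).clm_apply (differentiableAt_const b')) c' a,
        fderiv_clm_apply_const' (hφ3 x) b' a]
    have e2 : fderiv ℝ (fun y => fderiv ℝ (fderiv ℝ φ) y c' b') x a
        = fderiv ℝ (fderiv ℝ (fderiv ℝ φ)) x a c' b' := by
      rw [fderiv_clm_apply_const' ((hφ3 x).clm_apply (differentiableAt_const c')) b' a,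
        fderiv_clm_apply_const' (hφ3 x) c' a]
    rw [← e1, ← e2]
    have hfe : (fun y => fderiv ℝ (fderiv ℝ φ) y b' c')
        = fun y => fderiv ℝ (fderiv ℝ φ) y c' b' := funext fun y => symb y b' c'
    rw [hfe]
  have e3 : fderiv ℝ (fun y => fderiv ℝ (fderiv ℝ φ) y v v) x (f x)
      = fderiv ℝ (fderiv ℝ (fderiv ℝ φ)) x (f x) v v := by
    rw [fderiv_clm_apply_const' ((hφ3 x).clm_apply (differentiableAt_const v)) v (f x),
      fderiv_clm_apply_const' (hφ3 x) v (f x)]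
  have e4 : fderiv ℝ (fderiv ℝ (fderiv ℝ φ)) x v v (f x)
      = fderiv ℝ (fderiv ℝ (fderiv ℝ φ)) x (f x) v v := by
    rw [symD3 v v (f x)]
    exact DFunLike.congr_fun (syma v (f x)) v
  rw [step1, hfun, fderiv_fun_add (hd1 x) (hd2 x)]
  simp only [ContinuousLinearMap.add_apply]
  rw [t1, t2, e3, e4, symb x v (fderiv ℝ f x v)]
  ring

end Key

section KeySum

variable {E : Type*} [NormedAddCommGroup E] [NormedSpace ℝ E]

lemma commutator_key {ι : Type*} [Fintype ι] (f : E → E) (hf : ContDiff ℝ 2 f)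
    (φ : E → ℝ) (hφ : ContDiff ℝ 4 φ) (e : ι → E) (x : E) :
    ∑ i : ι, iteratedFDeriv ℝ 2 (fun y => fderiv ℝ φ y (f y)) x ![e i, e i]
      - fderiv ℝ (fun y => ∑ i : ι, iteratedFDeriv ℝ 2 φ y ![e i, e i]) x (f x)
    = fderiv ℝ φ x (∑ i : ι, iteratedFDeriv ℝ 2 f x ![e i, e i])
      + 2 * ∑ i : ι, iteratedFDeriv ℝ 2 φ x ![fderiv ℝ f x (e i), e i] := by
  have hφ3 : Differentiable ℝ (fderiv ℝ (fderiv ℝ φ)) :=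
    ((hφ.fderiv_right (m := 3) (by norm_num)).fderiv_right (m := 2)
      (by norm_num)).differentiable (by norm_num)
  have hDrw : (fun y => ∑ i : ι, iteratedFDeriv ℝ 2 φ y ![e i, e i])
      = fun y => ∑ i : ι, fderiv ℝ (fderiv ℝ φ) y (e i) (e i) := by
    funext y; simp [iteratedFDeriv_two_apply]
  have hQ : fderiv ℝ (fun y => ∑ i : ι, iteratedFDeriv ℝ 2 φ y ![e i, e i]) x (f x)
      = ∑ i : ι, fderiv ℝ (fun y => fderiv ℝ (fderiv ℝ φ) y (e i) (e i)) x (f x) := by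
    rw [hDrw, fderiv_fun_sum (fun i _ =>
      ((hφ3 _).clm_apply (differentiableAt_const (e i))).clm_apply
        (differentiableAt_const (e i)))]
    simp
  have hRi : ∀ i : ι, iteratedFDeriv ℝ 2 (fun y => fderiv ℝ φ y (f y)) x ![e i, e i]
      = fderiv ℝ (fun y => fderiv ℝ (fderiv ℝ φ) y (e i) (e i)) x (f x)
        + fderiv ℝ φ x (iteratedFDeriv ℝ 2 f x ![e i, e i])
        + 2 * iteratedFDeriv ℝ 2 φ x ![fderiv ℝ f x (e i), e i] := by
    intro i
    rw [iteratedFDeriv_two_apply, iteratedFDeriv_two_apply (𝕜 := ℝ) f,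
      iteratedFDeriv_two_apply (𝕜 := ℝ) φ]
    simp only [Matrix.cons_val_zero, Matrix.cons_val_one, Matrix.head_cons]
    exact key_i f hf φ hφ x (e i)
  rw [hQ]
  simp only [hRi]
  rw [Finset.sum_add_distrib, Finset.sum_add_distrib,
    ← map_sum (fderiv ℝ φ x) (fun i => iteratedFDeriv ℝ 2 f x ![e i, e i]) Finset.univ,
    ← Finset.mul_sum]
  ring

end KeySum

/-- For `f : ℝ^d → ℝ^d` of class `C²` and `φ : ℝ^d → ℝ` of class `C⁴`,
with `Lψ = ∇ψ·f + (σ²/2)Δψ` and `Ā₁ψ = b∇ψ·f + (c²σ²/2)Δψ`, the commutator satisfies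
pointwise
`[L,Ā₁]φ(x) = ((b-c²)/2)σ² φ'(x)(Σᵢ f''(x)(eᵢ,eᵢ)) + (b-c²)σ² Σᵢ φ''(x)(f'(x)eᵢ, eᵢ)`. -/
theorem commutator_generator_postprocessor
    (d : ℕ) (hd : 1 ≤ d) (σ b c : ℝ) (hσ : 0 < σ)
    (f : EuclideanSpace ℝ (Fin d) → EuclideanSpace ℝ (Fin d)) (hf : ContDiff ℝ 2 f)
    (φ : EuclideanSpace ℝ (Fin d) → ℝ) (hφ : ContDiff ℝ 4 φ)
    (e : Fin d → EuclideanSpace ℝ (Fin d))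
    (he : ∀ i, e i = EuclideanSpace.single i 1)
    (L Abar : (EuclideanSpace ℝ (Fin d) → ℝ) → EuclideanSpace ℝ (Fin d) → ℝ)
    (hL : ∀ ψ x, L ψ x
      = fderiv ℝ ψ x (f x) + σ ^ 2 / 2 * ∑ i : Fin d, iteratedFDeriv ℝ 2 ψ x ![e i, e i])
    (hAbar : ∀ ψ x, Abar ψ x
      = b * fderiv ℝ ψ x (f x)
        + c ^ 2 * σ ^ 2 / 2 * ∑ i : Fin d, iteratedFDeriv ℝ 2 ψ x ![e i, e i]) :
    ∀ x, L (Abar φ) x - Abar (L φ) x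
      = (b - c ^ 2) / 2 * σ ^ 2
          * fderiv ℝ φ x (∑ i : Fin d, iteratedFDeriv ℝ 2 f x ![e i, e i])
        + (b - c ^ 2) * σ ^ 2
          * ∑ i : Fin d, iteratedFDeriv ℝ 2 φ x ![fderiv ℝ f x (e i), e i] := by
  intro x
  have hAφ : ContDiff ℝ 2 (fun y => fderiv ℝ φ y (f y)) :=
    (hφ.fderiv_right (m := 2) (by norm_num)).clm_apply hf
  have hDl : ContDiff ℝ 2 (fun y => ∑ i : Fin d, iteratedFDeriv ℝ 2 φ y ![e i, e i]) := by
    have h : (fun y => ∑ i : Fin d, iteratedFDeriv ℝ 2 φ y ![e i, e i])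
        = fun y => ∑ i : Fin d, fderiv ℝ (fderiv ℝ φ) y (e i) (e i) := by
      funext y; simp [iteratedFDeriv_two_apply]
    rw [h]
    exact ContDiff.sum fun i _ =>
      (((hφ.fderiv_right (m := 3) (by norm_num)).fderiv_right (m := 2)
        (by norm_num)).clm_apply contDiff_const).clm_apply contDiff_const
  have hAφd : Differentiable ℝ (fun y => fderiv ℝ φ y (f y)) :=
    hAφ.differentiable two_ne_zero
  have hDld : Differentiable ℝ (fun y => ∑ i : Fin d, iteratedFDeriv ℝ 2 φ y ![e i, e i]) :=
    hDl.differentiable two_ne_zero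
  have hcombo_f : ∀ α β : ℝ,
      fderiv ℝ (fun z => α * fderiv ℝ φ z (f z)
          + β * ∑ i : Fin d, iteratedFDeriv ℝ 2 φ z ![e i, e i]) x (f x)
      = α * fderiv ℝ (fun z => fderiv ℝ φ z (f z)) x (f x)
        + β * fderiv ℝ (fun z => ∑ i : Fin d, iteratedFDeriv ℝ 2 φ z ![e i, e i]) x (f x) := by
    intro α β
    rw [fderiv_fun_add ((hAφd x).const_mul α) ((hDld x).const_mul β),
      fderiv_const_mul (hAφd x) α, fderiv_const_mul (hDld x) β]
    simp
  have hcombo_i : ∀ (α β : ℝ) (m : Fin 2 → EuclideanSpace ℝ (Fin d)),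
      iteratedFDeriv ℝ 2 (fun z => α * fderiv ℝ φ z (f z)
          + β * ∑ i : Fin d, iteratedFDeriv ℝ 2 φ z ![e i, e i]) x m
      = α * iteratedFDeriv ℝ 2 (fun z => fderiv ℝ φ z (f z)) x m
        + β * iteratedFDeriv ℝ 2
            (fun z => ∑ i : Fin d, iteratedFDeriv ℝ 2 φ z ![e i, e i]) x m := by
    intro α β m
    have hs1 : ContDiff ℝ 2 (α • (fun y => fderiv ℝ φ y (f y))) := hAφ.const_smul α
    have hs2 : ContDiff ℝ 2
        (β • (fun y => ∑ i : Fin d, iteratedFDeriv ℝ 2 φ y ![e i, e i])) := hDl.const_smul β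
    have h1 : (fun z => α * fderiv ℝ φ z (f z)
          + β * ∑ i : Fin d, iteratedFDeriv ℝ 2 φ z ![e i, e i])
        = (α • (fun y => fderiv ℝ φ y (f y))
          + β • (fun y => ∑ i : Fin d, iteratedFDeriv ℝ 2 φ y ![e i, e i])) := by
      funext z; simp
    rw [h1, iteratedFDeriv_add_apply hs1.contDiffAt hs2.contDiffAt,
      iteratedFDeriv_const_smul_apply hAφ.contDiffAt, iteratedFDeriv_const_smul_apply hDl.contDiffAt]
    simp
  have hAbarφ : Abar φ = fun z => b * fderiv ℝ φ z (f z)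
      + c ^ 2 * σ ^ 2 / 2 * ∑ i : Fin d, iteratedFDeriv ℝ 2 φ z ![e i, e i] :=
    funext fun z => hAbar φ z
  have hLφ : L φ = fun z => 1 * fderiv ℝ φ z (f z)
      + σ ^ 2 / 2 * ∑ i : Fin d, iteratedFDeriv ℝ 2 φ z ![e i, e i] :=
    funext fun z => by rw [hL]; ring
  have key := commutator_key f hf φ hφ e x
  rw [hL (Abar φ) x, hAbar (L φ) x, hAbarφ, hLφ, hcombo_f b (c ^ 2 * σ ^ 2 / 2),
    hcombo_f 1 (σ ^ 2 / 2)]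
  simp only [hcombo_i]
  rw [Finset.sum_add_distrib, Finset.sum_add_distrib, ← Finset.mul_sum, ← Finset.mul_sum,
    ← Finset.mul_sum, ← Finset.mul_sum]
  linear_combination (σ ^ 2 / 2 * b - c ^ 2 * σ ^ 2 / 2) * key
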